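/- Let X be a nonnegative random variable with CDF F (the Gamma(μ₀+1, scale φ₀) CDF) and let Y be an independent exponentially distributed random variable with mean Ω_I > 0. For j = 1,…,k define the random SINR γ_{k→j} = λ_q² β² X² ρ a_j / (β² X² ρ ϑ_j + d_sr^α β² M N_r Δ₁ + d_sr^α d_k^α (λ_q² + ε ρ Y)). Then the outage probability of user k, namely 1 − P(γ_{k→j} > γ_thj for all j = 1,…,k), equals ∫₀^∞ e^{−z} · F(√(φ* · d_sr^α · (β² M N_r Δ₁ + d_k^α (λ_q² + ε ρ Ω_I z)))) dz, where φ_j = γ_thj/(β² ρ (λ_q² a_j − γ_thj ϑ_j)) and φ* = max_{1≤j≤k} φ_j. -/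

import Mathlib

open MeasureTheory ProbabilityTheory Topology Filter
open scoped ENNReal NNReal

/-- Lower incomplete gamma function `γ(s, x) = ∫₀ˣ t^{s-1} e^{-t} dt`. -/
noncomputable def lowerGamma (s x : ℝ) : ℝ := ∫ t in (0:ℝ)..x, t ^ (s - 1) * Real.exp (-t)

/-- `μ₀ = ((M+1)π² − 16)/(16 − π²)`. -/
noncomputable def mu0 (M : ℕ) : ℝ := (((M : ℝ) + 1) * Real.pi ^ 2 - 16) / (16 - Real.pi ^ 2)

/-- `φ₀ = (16 − π²)/(4π)`. -/
noncomputable def phi0 : ℝ := (16 - Real.pi ^ 2) / (4 * Real.pi)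

/-- The CDF of the Gamma distribution with shape `μ₀+1` and scale `φ₀`:
`F(x) = γ(μ₀+1, x/φ₀)/Γ(μ₀+1)`. -/
noncomputable def F (M : ℕ) (x : ℝ) : ℝ :=
  lowerGamma (mu0 M + 1) (x / phi0) / Real.Gamma (mu0 M + 1)

section Aux

open Set

/-- The joint probability `P(X ≤ g(Y))` as an integral of the CDF of `X`
against the law of `Y`. -/
lemma aux_joint {Ω : Type*} [MeasurableSpace Ω] (Pm : Measure Ω) [IsProbabilityMeasure Pm]
    (X Y : Ω → ℝ) (hXm : Measurable X) (hYm : Measurable Y) (hindep : IndepFun X Y Pm)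
    (g : ℝ → ℝ) (hg : Continuous g) (hgnn : ∀ y, 0 ≤ g y)
    (FX : ℝ → ℝ) (hXcdf : ∀ x : ℝ, 0 ≤ x → (Pm {ω | X ω ≤ x}).toReal = FX x) :
    (Pm {ω | X ω ≤ g (Y ω)}).toReal = ∫ y, FX (g y) ∂(Pm.map Y) := by
  haveI hμX : IsProbabilityMeasure (Pm.map X) := Measure.isProbabilityMeasure_map hXm.aemeasurable
  haveI hμY : IsProbabilityMeasure (Pm.map Y) := Measure.isProbabilityMeasure_map hYm.aemeasurable
  have hs : MeasurableSet {p : ℝ × ℝ | p.1 ≤ g p.2} :=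
    measurableSet_le measurable_fst (hg.measurable.comp measurable_snd)
  have hmap : Pm {ω | X ω ≤ g (Y ω)}
      = ((Pm.map X).prod (Pm.map Y)) {p : ℝ × ℝ | p.1 ≤ g p.2} := by
    rw [← (indepFun_iff_map_prod_eq_prod_map_map hXm.aemeasurable hYm.aemeasurable).mp hindep,
      Measure.map_apply (hXm.prodMk hYm) hs]
    rfl
  have hprod : ((Pm.map X).prod (Pm.map Y)) {p : ℝ × ℝ | p.1 ≤ g p.2}
      = ∫⁻ y, (Pm.map X) (Set.Iic (g y)) ∂(Pm.map Y) := by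
    rw [Measure.prod_apply_symm hs]
    rfl
  have hmono : Monotone (fun x : ℝ => (Pm.map X) (Set.Iic x)) :=
    fun u v huv => measure_mono (Set.Iic_subset_Iic.mpr huv)
  have haem : AEMeasurable (fun y => (Pm.map X) (Set.Iic (g y))) (Pm.map Y) :=
    ((hmono.measurable).comp hg.measurable).aemeasurable
  rw [hmap, hprod, ← integral_toReal haem
    (ae_of_all _ fun y => lt_of_le_of_lt prob_le_one ENNReal.one_lt_top)]
  refine integral_congr_ae (ae_of_all _ fun y => ?_)
  show ((Pm.map X) (Set.Iic (g y))).toReal = FX (g y)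
  rw [Measure.map_apply hXm measurableSet_Iic]
  exact hXcdf (g y) (hgnn y)

/-- A nonnegative random variable with the exponential CDF has the exponential law. -/
lemma aux_law {Ω : Type*} [MeasurableSpace Ω] (Pm : Measure Ω) [IsProbabilityMeasure Pm]
    (Y : Ω → ℝ) (hYm : Measurable Y) (hYnn : ∀ ω, 0 ≤ Y ω)
    (ΩI : ℝ) (hΩI : 0 < ΩI)
    (hYcdf : ∀ y : ℝ, 0 ≤ y → (Pm {ω | Y ω ≤ y}).toReal = 1 - Real.exp (-(y / ΩI))) :
    Pm.map Y = expMeasure ΩI⁻¹ := by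
  have hr0 : 0 < ΩI⁻¹ := inv_pos.mpr hΩI
  haveI := isProbabilityMeasure_expMeasure hr0
  refine Measure.ext_of_Iic _ _ (fun t => ?_)
  rw [Measure.map_apply hYm measurableSet_Iic]
  have hexp : expMeasure ΩI⁻¹ (Set.Iic t) = ∫⁻ y in Set.Iic t, exponentialPDF ΩI⁻¹ y := by
    rw [expMeasure, gammaMeasure, withDensity_apply _ measurableSet_Iic]
    rfl
  rw [hexp, lintegral_exponentialPDF_eq_antiDeriv hr0 t]
  rcases le_or_gt 0 t with h0 | h0
  · rw [if_pos h0]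
    have h1 : Y ⁻¹' Set.Iic t = {ω | Y ω ≤ t} := rfl
    rw [h1, ← ENNReal.ofReal_toReal (measure_ne_top Pm _), hYcdf t h0]
    congr 2
    rw [div_eq_inv_mul]
  · rw [if_neg (not_le.mpr h0)]
    have h2 : Y ⁻¹' Set.Iic t = ∅ := by
      ext ω
      simp only [Set.mem_preimage, Set.mem_Iic, Set.mem_empty_iff_false, iff_false, not_le]
      exact lt_of_lt_of_le h0 (hYnn ω)
    rw [h2]
    simp

/-- Integration against the exponential law. -/
lemma aux_expint (r : ℝ) (hr : 0 < r) (h : ℝ → ℝ) :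
    ∫ y, h y ∂(expMeasure r) = ∫ y in Set.Ioi (0:ℝ), r * Real.exp (-(r * y)) * h y := by
  have hwd : expMeasure r = MeasureTheory.volume.withDensity
      (fun y => ((Real.toNNReal (exponentialPDFReal r y) : ℝ≥0) : ℝ≥0∞)) := rfl
  rw [hwd, integral_withDensity_eq_integral_smul (measurable_exponentialPDFReal r).real_toNNReal]
  have h1 : (∫ y, (Real.toNNReal (exponentialPDFReal r y)) • h y)
      = ∫ y, exponentialPDFReal r y * h y := by
    refine integral_congr_ae (ae_of_all _ fun y => ?_)
    show (Real.toNNReal (exponentialPDFReal r y)) • h y = exponentialPDFReal r y * h y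
    rw [NNReal.smul_def, smul_eq_mul, Real.coe_toNNReal _ (exponentialPDFReal_nonneg hr y)]
  rw [h1]
  rw [← setIntegral_eq_integral_of_forall_compl_eq_zero
    (s := Set.Ici (0:ℝ)) (fun y hy => ?_), integral_Ici_eq_integral_Ioi]
  · refine setIntegral_congr_fun measurableSet_Ioi (fun y hy => ?_)
    show exponentialPDFReal r y * h y = r * Real.exp (-(r * y)) * h y
    rw [exponentialPDFReal, gammaPDFReal, if_pos (le_of_lt (show (0:ℝ) < y from hy)), sub_self,
      Real.rpow_zero, Real.rpow_one, Real.Gamma_one, div_one, mul_one]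
  · have hneg : y < 0 := by simpa using hy
    rw [exponentialPDFReal, gammaPDFReal, if_neg (not_le.mpr hneg), zero_mul]

/-- Substitution `y = b z` in the exponential-weighted integral. -/
lemma aux_subst (b : ℝ) (hb : 0 < b) (h : ℝ → ℝ) :
    ∫ y in Set.Ioi (0:ℝ), b⁻¹ * Real.exp (-(b⁻¹ * y)) * h y
      = ∫ z in Set.Ioi (0:ℝ), Real.exp (-z) * h (b * z) := by
  have h1 := integral_comp_mul_left_Ioi
    (fun y => b⁻¹ * Real.exp (-(b⁻¹ * y)) * h y) 0 hb
  simp only [mul_zero] at h1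
  rw [smul_eq_mul] at h1
  have h2 : ∀ z : ℝ, b⁻¹ * (b * z) = z := fun z => by field_simp
  simp only [h2] at h1
  simp only [mul_assoc] at h1
  rw [integral_const_mul] at h1
  simp only [mul_assoc]
  exact (mul_left_cancel₀ (ne_of_gt (inv_pos.mpr hb)) h1).symm

end Aux

/-- **Theorem 1 (ARIS-NOMA, ipSIC)**: the outage probability of user `k` equals
`∫₀^∞ e^{−z} F(√(φ* d_sr^α (β² M N_r Δ₁ + d_k^α (λ_q² + ε ρ Ω_I z)))) dz`. -/
theorem outage_probability_ARIS_NOMA_ipSIC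
    {Ω : Type*} [MeasurableSpace Ω] (Pm : Measure Ω) [IsProbabilityMeasure Pm]
    (M : ℕ) (hM : 0 < M)
    (X Y : Ω → ℝ) (hXm : Measurable X) (hYm : Measurable Y)
    (hXnn : ∀ ω, 0 ≤ X ω) (hYnn : ∀ ω, 0 ≤ Y ω)
    -- X has the Gamma(μ₀+1, scale φ₀) CDF F
    (hXcdf : ∀ x : ℝ, 0 ≤ x → (Pm {ω | X ω ≤ x}).toReal = F M x)
    -- Y is exponentially distributed with mean Ω_I
    (ΩI : ℝ) (hΩI : 0 < ΩI)
    (hYcdf : ∀ y : ℝ, 0 ≤ y → (Pm {ω | Y ω ≤ y}).toReal = 1 - Real.exp (-(y / ΩI)))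
    (hindep : IndepFun X Y Pm)
    (k : ℕ) (hk : 1 ≤ k)
    (lamq beta rho Nr Δ1 alpha dsr dk eps : ℝ)
    (a th gth : ℕ → ℝ)
    (hlam0 : 0 < lamq) (hlam1 : lamq ≤ 1) (hbeta : 0 < beta) (hrho : 0 < rho)
    (hNr : 0 < Nr) (hΔ1 : 0 < Δ1) (halpha : 0 < alpha) (hdsr : 0 < dsr) (hdk : 0 < dk)
    (heps0 : 0 < eps) (heps1 : eps ≤ 1)
    (ha : ∀ j ∈ Finset.Icc 1 k, 0 < a j)
    (hth : ∀ j ∈ Finset.Icc 1 k, 0 < th j)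
    (hgth : ∀ j ∈ Finset.Icc 1 k, 0 < gth j)
    (hcond : ∀ j ∈ Finset.Icc 1 k, gth j * th j < lamq ^ 2 * a j) :
    1 - (Pm {ω | ∀ j ∈ Finset.Icc 1 k,
          gth j < lamq ^ 2 * beta ^ 2 * (X ω) ^ 2 * rho * a j /
            (beta ^ 2 * (X ω) ^ 2 * rho * th j
              + dsr ^ alpha * beta ^ 2 * (M : ℝ) * Nr * Δ1
              + dsr ^ alpha * dk ^ alpha * (lamq ^ 2 + eps * rho * Y ω))}).toReal
      = ∫ z in Set.Ioi (0 : ℝ), Real.exp (-z) *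
          F M (Real.sqrt
            ((Finset.Icc 1 k).sup' (Finset.nonempty_Icc.mpr hk)
                (fun j => gth j / (beta ^ 2 * rho * (lamq ^ 2 * a j - gth j * th j)))
              * (dsr ^ alpha *
                  (beta ^ 2 * (M : ℝ) * Nr * Δ1
                    + dk ^ alpha * (lamq ^ 2 + eps * rho * ΩI * z))))) := by
  have hMpos : (0:ℝ) < (M : ℝ) := by exact_mod_cast hM
  have hr0 : 0 < ΩI⁻¹ := inv_pos.mpr hΩI
  set P : ℝ := (Finset.Icc 1 k).sup' (Finset.nonempty_Icc.mpr hk)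
      (fun j => gth j / (beta ^ 2 * rho * (lamq ^ 2 * a j - gth j * th j))) with hPdef
  have hφpos : ∀ j ∈ Finset.Icc 1 k,
      0 < gth j / (beta ^ 2 * rho * (lamq ^ 2 * a j - gth j * th j)) := by
    intro j hj
    exact div_pos (hgth j hj)
      (mul_pos (by positivity) (sub_pos.mpr (hcond j hj)))
  have hPpos : 0 < P := by
    obtain ⟨j, hj⟩ := Finset.nonempty_Icc.mpr hk
    exact lt_of_lt_of_le (hφpos j hj)
      (Finset.le_sup' (fun j => gth j / (beta ^ 2 * rho * (lamq ^ 2 * a j - gth j * th j))) hj)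
  set g : ℝ → ℝ := fun y => Real.sqrt (P * (dsr ^ alpha *
      (beta ^ 2 * (M : ℝ) * Nr * Δ1 + dk ^ alpha * (lamq ^ 2 + eps * rho * y)))) with hgdef
  have hdsra : 0 < dsr ^ alpha := Real.rpow_pos_of_pos hdsr alpha
  have hdka : 0 < dk ^ alpha := Real.rpow_pos_of_pos hdk alpha
  have hCpos : ∀ y : ℝ, 0 ≤ y →
      0 < dsr ^ alpha * (beta ^ 2 * (M : ℝ) * Nr * Δ1
        + dk ^ alpha * (lamq ^ 2 + eps * rho * y)) := by
    intro y hy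
    refine mul_pos hdsra (add_pos_of_pos_of_nonneg (by positivity) ?_)
    exact mul_nonneg hdka.le
      (add_nonneg (sq_nonneg lamq) (mul_nonneg (mul_nonneg heps0.le hrho.le) hy))
  have hgcont : Continuous g := by
    rw [hgdef]; fun_prop
  -- event identification
  have hev : {ω | ∀ j ∈ Finset.Icc 1 k,
          gth j < lamq ^ 2 * beta ^ 2 * (X ω) ^ 2 * rho * a j /
            (beta ^ 2 * (X ω) ^ 2 * rho * th j
              + dsr ^ alpha * beta ^ 2 * (M : ℝ) * Nr * Δ1
              + dsr ^ alpha * dk ^ alpha * (lamq ^ 2 + eps * rho * Y ω))}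
      = {ω | g (Y ω) < X ω} := by
    ext ω
    simp only [Set.mem_setOf_eq]
    have hx : 0 ≤ X ω := hXnn ω
    have hy : 0 ≤ Y ω := hYnn ω
    have hC0 : 0 < dsr ^ alpha * (beta ^ 2 * (M : ℝ) * Nr * Δ1
        + dk ^ alpha * (lamq ^ 2 + eps * rho * Y ω)) := hCpos _ hy
    have hstep : ∀ j ∈ Finset.Icc 1 k,
        (gth j < lamq ^ 2 * beta ^ 2 * (X ω) ^ 2 * rho * a j /
            (beta ^ 2 * (X ω) ^ 2 * rho * th j
              + dsr ^ alpha * beta ^ 2 * (M : ℝ) * Nr * Δ1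
              + dsr ^ alpha * dk ^ alpha * (lamq ^ 2 + eps * rho * Y ω))
          ↔ gth j / (beta ^ 2 * rho * (lamq ^ 2 * a j - gth j * th j))
              < (X ω) ^ 2 / (dsr ^ alpha * (beta ^ 2 * (M : ℝ) * Nr * Δ1
                  + dk ^ alpha * (lamq ^ 2 + eps * rho * Y ω)))) := by
      intro j hj
      have hD : 0 < beta ^ 2 * rho * (lamq ^ 2 * a j - gth j * th j) :=
        mul_pos (by positivity) (sub_pos.mpr (hcond j hj))
      have hth' := (hth j hj).le
      have h1 : 0 ≤ beta ^ 2 * (X ω) ^ 2 * rho * th j := by positivity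
      have hden : 0 < beta ^ 2 * (X ω) ^ 2 * rho * th j
              + dsr ^ alpha * beta ^ 2 * (M : ℝ) * Nr * Δ1
              + dsr ^ alpha * dk ^ alpha * (lamq ^ 2 + eps * rho * Y ω) := by
        nlinarith [hC0, h1]
      rw [lt_div_iff₀ hden, div_lt_div_iff₀ hD hC0]
      constructor <;> intro h <;> nlinarith [h]
    constructor
    · intro h
      have hsup : P < (X ω) ^ 2 / (dsr ^ alpha * (beta ^ 2 * (M : ℝ) * Nr * Δ1
          + dk ^ alpha * (lamq ^ 2 + eps * rho * Y ω))) := by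
        rw [hPdef, Finset.sup'_lt_iff]
        intro j hj
        exact (hstep j hj).mp (h j hj)
      have hx0 : 0 < X ω := by
        rcases hx.eq_or_lt with h0 | h0
        · exfalso
          have : (X ω) ^ 2 / (dsr ^ alpha * (beta ^ 2 * (M : ℝ) * Nr * Δ1
              + dk ^ alpha * (lamq ^ 2 + eps * rho * Y ω))) = 0 := by
            rw [← h0]; simp
          rw [this] at hsup; linarith
        · exact h0
      rw [hgdef]
      rw [Real.sqrt_lt' hx0]
      rw [lt_div_iff₀ hC0] at hsup
      linarith [hsup]
    · intro h j hj
      have hx0 : 0 < X ω := lt_of_le_of_lt (Real.sqrt_nonneg _) h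
      rw [hgdef, Real.sqrt_lt' hx0] at h
      have hsup : P < (X ω) ^ 2 / (dsr ^ alpha * (beta ^ 2 * (M : ℝ) * Nr * Δ1
          + dk ^ alpha * (lamq ^ 2 + eps * rho * Y ω))) := by
        rw [lt_div_iff₀ hC0]; linarith
      rw [hPdef, Finset.sup'_lt_iff] at hsup
      exact (hstep j hj).mpr (hsup j hj)
  -- measurability and complement
  have hgnn : ∀ y, 0 ≤ g y := fun y => by rw [hgdef]; exact Real.sqrt_nonneg _
  have hBmeas : MeasurableSet {ω | X ω ≤ g (Y ω)} :=
    measurableSet_le hXm (hgcont.measurable.comp hYm)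
  have hAc : {ω | g (Y ω) < X ω} = {ω | X ω ≤ g (Y ω)}ᶜ := by
    ext ω; simp [not_le]
  rw [hev, hAc, prob_compl_eq_one_sub hBmeas,
    ENNReal.toReal_sub_of_le prob_le_one ENNReal.one_ne_top, ENNReal.toReal_one,
    sub_sub_cancel]
  rw [aux_joint Pm X Y hXm hYm hindep g hgcont hgnn (F M) hXcdf,
    aux_law Pm Y hYm hYnn ΩI hΩI hYcdf, aux_expint ΩI⁻¹ (inv_pos.mpr hΩI) (fun y => F M (g y)),
    aux_subst ΩI hΩI (fun y => F M (g y))]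
  have harg : ∀ z : ℝ,
      P * (dsr ^ alpha * (beta ^ 2 * (M : ℝ) * Nr * Δ1
        + dk ^ alpha * (lamq ^ 2 + eps * rho * (ΩI * z))))
      = P * (dsr ^ alpha * (beta ^ 2 * (M : ℝ) * Nr * Δ1
        + dk ^ alpha * (lamq ^ 2 + eps * rho * ΩI * z))) := fun z => by ring
  simp only [hgdef, harg]
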